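/- Let G = (V, E) be a finite directed graph with |V| ≥ 2 and v_init ∈ V. Define the MDP M with states S = V ∪ {s₀, s_⊥, s_a, s_b} ∪ {u₁,…,u_{|V|−1}} (all fresh) and actions Act = E ∪ {τ}, and transitions: P(s₀,τ,v_init) = P(s₀,τ,u₁) = 1/2; P(uᵢ,τ,u_{i+1}) = P(uᵢ,τ,s_⊥) = 1/2 for 1 ≤ i ≤ |V|−2; P(u_{|V|−1},τ,s_b) = P(u_{|V|−1},τ,s_⊥) = 1/2; for every edge (v,v') ∈ E, P(v,(v,v'),v') = P(v,(v,v'),s_⊥) = 1/2; P(v,τ,s_a) = 1 for every v ∈ V; P(s_⊥,τ,s_⊥) = P(s_a,τ,s_a) = P(s_b,τ,s_b) = 1; and all other transition probabilities are 0. Then for every rational ε with 0 ≤ ε < 2^{−(|V|+1)}: G contains a Hamiltonian path starting at v_init (a directed path starting at v_init that visits every vertex of V exactly once) if and only if there exists a memoryless deterministic scheduler σ for M with |Pr^{M,σ}_{s₀}(◇{s_a}) − Pr^{M,σ}_{s₀}(◇{s_b})| ≤ ε. -/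

import Mathlib

open scoped Classical
open Filter

noncomputable section

/-- A Markov decision process with state space `S` and action space `A`. -/
structure MDP (S A : Type) where
  P : S → A → S → ℝ
  nonneg : ∀ s a s', 0 ≤ P s a s'
  le_one : ∀ s a s', P s a s' ≤ 1
  exists_enabled : ∀ s : S, ∃ a : A, (∑' s', P s a s') = 1
  zero_of_not_enabled : ∀ (s : S) (a : A), (∑' s', P s a s') ≠ 1 → (∑' s', P s a s') = 0

namespace MDP

variable {S A : Type}

/-- Action `a` is enabled in state `s`. -/
def Enabled (M : MDP S A) (s : S) (a : A) : Prop := (∑' s', M.P s a s') = 1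

/-- `s` is an absorbing state. -/
def AbsorbingState (M : MDP S A) (s : S) : Prop := ∀ a : A, M.Enabled s a → M.P s a s = 1

/-- An absorbing set of states: all its elements are absorbing. -/
def AbsorbingSet (M : MDP S A) (T : Set S) : Prop := ∀ s ∈ T, M.AbsorbingState s

end MDP

/-- A finite path: an initial state together with a list of (action, next state) steps. -/
abbrev FPath (S A : Type) : Type := S × List (A × S)

/-- The last state of a finite path. -/
def fpLast {S A : Type} (p : FPath S A) : S := ((p.2.map Prod.snd).getLast?).getD p.1

/-- Extending a finite path by one step. -/
def fpExt {S A : Type} (p : FPath S A) (a : A) (s' : S) : FPath S A := (p.1, p.2 ++ [(a, s')])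

/-- A (history-dependent, randomized) scheduler for the MDP `M`. -/
structure Scheduler {S A : Type} (M : MDP S A) where
  act : FPath S A → A → ℝ
  nonneg : ∀ p a, 0 ≤ act p a
  sum_one : ∀ p, (∑' a, act p a) = 1
  not_enabled : ∀ p a, ¬ M.Enabled (fpLast p) a → act p a = 0

namespace Scheduler

variable {S A : Type} {M : MDP S A}

/-- A memoryless scheduler depends only on the last state of the path. -/
def Memoryless (σ : Scheduler M) : Prop :=
  ∀ p : FPath S A, σ.act p = σ.act (fpLast p, ([] : List (A × S)))

/-- A deterministic scheduler chooses a Dirac distribution on every path. -/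
def Deterministic (σ : Scheduler M) : Prop := ∀ p : FPath S A, ∃ a : A, σ.act p a = 1

/-- A memoryless deterministic (MD) scheduler. -/
def MD (σ : Scheduler M) : Prop := σ.Memoryless ∧ σ.Deterministic

end Scheduler

/-- One-step expectation operator: expected value of `g` after one step from `p`. -/
def stepExp {S A : Type} (M : MDP S A) (σ : Scheduler M) (p : FPath S A)
    (g : FPath S A → ℝ) : ℝ :=
  ∑' a : A, ∑' s' : S, σ.act p a * M.P (fpLast p) a s' * g (fpExt p a s')

/-- Probability of visiting `T` within `n` further steps, continuing the finite path `p`. -/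
def reachN {S A : Type} (M : MDP S A) (σ : Scheduler M) (T : Set S) :
    ℕ → FPath S A → ℝ
  | 0, p => if fpLast p ∈ T then 1 else 0
  | n + 1, p => if fpLast p ∈ T then 1 else stepExp M σ p (reachN M σ T n)

/-- Reachability probability `Pr^{M,σ}_s(◇T)`. -/
def reachProb {S A : Type} (M : MDP S A) (σ : Scheduler M) (s : S) (T : Set S) : ℝ :=
  ⨆ n : ℕ, reachN M σ T n (s, [])

/-- Probability of visiting `T` at some time `≥ j` within `j + n` steps, from path `p`. -/
def reachAfterN {S A : Type} (M : MDP S A) (σ : Scheduler M) (T : Set S) :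
    ℕ → ℕ → FPath S A → ℝ
  | 0, n, p => reachN M σ T n p
  | j + 1, n, p => stepExp M σ p (fun p' => reachAfterN M σ T j n p')

/-- Büchi probability `Pr^{M,σ}_s(□◇T)`: the probability of visiting `T` infinitely often. -/
def buchiProb {S A : Type} (M : MDP S A) (σ : Scheduler M) (s : S) (T : Set S) : ℝ :=
  ⨅ j : ℕ, ⨆ n : ℕ, reachAfterN M σ T j n (s, [])

/-- Expected sum of the rewards of the first `n+1` states (counting the current one). -/
def expRewN {S A : Type} (M : MDP S A) (σ : Scheduler M) (R : S → ℝ) :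
    ℕ → FPath S A → ℝ
  | 0, p => R (fpLast p)
  | n + 1, p => R (fpLast p) + stepExp M σ p (fun p' => expRewN M σ R n p')

/-- Expected total reward `E^{M,σ}_s(R)`. -/
def expTotalReward {S A : Type} (M : MDP S A) (σ : Scheduler M) (R : S → ℝ) (s : S) : ℝ :=
  limUnder atTop (fun n => expRewN M σ R n (s, []))

end

/-- The fresh extra states `s₀`, `s_⊥`, `s_a`, `s_b` of the Hamiltonian-path MDP. -/
inductive HX : Type where
  | s0 : HX
  | bot : HX
  | sa : HX
  | sb : HX
deriving DecidableEq

/-- States of the Hamiltonian-path MDP: vertices, the fresh states, and `u₁, …, u_{N-1}`. -/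
abbrev HSt (V : Type) (N : ℕ) : Type := V ⊕ (HX ⊕ Fin (N - 1))

/-- Actions of the Hamiltonian-path MDP: edges of the graph, and the fresh action `τ`. -/
abbrev HAct (V : Type) (E : Set (V × V)) : Type := {e : V × V // e ∈ E} ⊕ Unit

def hs0 {V : Type} {N : ℕ} : HSt V N := Sum.inr (Sum.inl HX.s0)
def hbot {V : Type} {N : ℕ} : HSt V N := Sum.inr (Sum.inl HX.bot)
def hsa {V : Type} {N : ℕ} : HSt V N := Sum.inr (Sum.inl HX.sa)
def hsb {V : Type} {N : ℕ} : HSt V N := Sum.inr (Sum.inl HX.sb)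
def hu {V : Type} {N : ℕ} (i : Fin (N - 1)) : HSt V N := Sum.inr (Sum.inr i)
def hv {V : Type} {N : ℕ} (v : V) : HSt V N := Sum.inl v
def hτ {V : Type} {E : Set (V × V)} : HAct V E := Sum.inr ()

/-- The MDP constructed from the graph `(V, E)` with initial vertex `vinit`, where `N = |V|`. -/
def IsHamiltonMDP {V : Type} (N : ℕ) (E : Set (V × V)) (vinit : V)
    (M : MDP (HSt V N) (HAct V E)) : Prop :=
  M.P hs0 hτ (hv vinit) = 1/2 ∧
  (∀ h1 : 0 < N - 1, M.P hs0 hτ (hu ⟨0, h1⟩) = 1/2) ∧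
  (∀ i : Fin (N - 1), ∀ h : i.1 + 1 < N - 1, M.P (hu i) hτ (hu ⟨i.1 + 1, h⟩) = 1/2) ∧
  (∀ i : Fin (N - 1), i.1 + 1 = N - 1 → M.P (hu i) hτ hsb = 1/2) ∧
  (∀ i : Fin (N - 1), M.P (hu i) hτ hbot = 1/2) ∧
  (∀ e : {e : V × V // e ∈ E},
      M.P (hv e.1.1) (Sum.inl e) (hv e.1.2) = 1/2 ∧ M.P (hv e.1.1) (Sum.inl e) hbot = 1/2) ∧
  (∀ v : V, M.P (hv v) hτ hsa = 1) ∧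
  M.P hbot hτ hbot = 1 ∧ M.P hsa hτ hsa = 1 ∧ M.P hsb hτ hsb = 1 ∧
  (∀ (x : HSt V N) (a : HAct V E) (y : HSt V N), M.P x a y ≠ 0 →
    (x = hs0 ∧ a = hτ ∧ (y = hv vinit ∨ ∃ h1 : 0 < N - 1, y = hu ⟨0, h1⟩)) ∨
    (∃ i : Fin (N - 1), x = hu i ∧ a = hτ ∧
        (y = hbot ∨ (∃ h : i.1 + 1 < N - 1, y = hu ⟨i.1 + 1, h⟩) ∨ (i.1 + 1 = N - 1 ∧ y = hsb))) ∨
    (∃ e : {e : V × V // e ∈ E}, x = hv e.1.1 ∧ a = Sum.inl e ∧ (y = hv e.1.2 ∨ y = hbot)) ∨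
    (∃ v : V, x = hv v ∧ a = hτ ∧ y = hsa) ∨
    (x = hbot ∧ a = hτ ∧ y = hbot) ∨
    (x = hsa ∧ a = hτ ∧ y = hsa) ∨
    (x = hsb ∧ a = hτ ∧ y = hsb))

/-! ### Auxiliary development -/

set_option linter.unusedSectionVars false
noncomputable section HamAux

namespace HamAux

variable {S A : Type} [Fintype S] [Fintype A] {M : MDP S A}

lemma fpLast_nil (s : S) : fpLast ((s, ([] : List (A × S))) : FPath S A) = s := rfl

lemma fpLast_ext (p : FPath S A) (a : A) (s' : S) : fpLast (fpExt p a s') = s' := by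
  simp [fpLast, fpExt]

lemma tsum_fin (f : S → ℝ) : ∑' s, f s = ∑ s, f s := tsum_fintype f

lemma sum_two (f : S → ℝ) (y1 y2 : S) (h12 : y1 ≠ y2)
    (h0 : ∀ y, y ≠ y1 → y ≠ y2 → f y = 0) : ∑ y, f y = f y1 + f y2 := by
  rw [← Finset.sum_subset (Finset.subset_univ ({y1, y2} : Finset S))
      (fun x _ hx => by
        simp only [Finset.mem_insert, Finset.mem_singleton, not_or] at hx
        exact h0 x hx.1 hx.2)]
  rw [Finset.sum_pair h12]

lemma sum_single (f : S → ℝ) (y1 : S)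
    (h0 : ∀ y, y ≠ y1 → f y = 0) : ∑ y, f y = f y1 := by
  rw [← Finset.sum_subset (Finset.subset_univ ({y1} : Finset S))
      (fun x _ hx => by
        simp only [Finset.mem_singleton] at hx
        exact h0 x hx)]
  rw [Finset.sum_singleton]

lemma sumP_le_one (s : S) (a : A) : ∑ s', M.P s a s' ≤ 1 := by
  by_cases h : (∑' s', M.P s a s') = 1
  · rw [tsum_fin] at h; exact le_of_eq h
  · have h2 := M.zero_of_not_enabled s a h
    rw [tsum_fin] at h2
    rw [h2]; norm_num

/-- The action chosen by a deterministic scheduler at a state. -/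
def choice (σ : Scheduler M) (hdet : σ.Deterministic) (s : S) : A :=
  (hdet (s, ([] : List (A × S)))).choose

lemma choice_spec (σ : Scheduler M) (hdet : σ.Deterministic) (s : S) :
    σ.act (s, ([] : List (A × S))) (choice σ hdet s) = 1 :=
  (hdet (s, ([] : List (A × S)))).choose_spec

lemma act_eq_ite (σ : Scheduler M) (hσ : σ.MD) (p : FPath S A) (a : A) :
    σ.act p a = if a = choice σ hσ.2 (fpLast p) then 1 else 0 := by
  rw [hσ.1 p]
  set s := fpLast p
  by_cases h : a = choice σ hσ.2 s
  · rw [if_pos h, h, choice_spec]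
  · rw [if_neg h]
    have hsum : ∑ b, σ.act (s, ([] : List (A × S))) b = 1 := by
      rw [← tsum_fintype (L := SummationFilter.unconditional _)]; exact σ.sum_one _
    have h1 := choice_spec σ hσ.2 s
    have h2 : ∑ b ∈ Finset.univ.erase (choice σ hσ.2 s),
        σ.act (s, ([] : List (A × S))) b = 0 := by
      have := Finset.add_sum_erase Finset.univ (σ.act (s, ([] : List (A × S))))
        (Finset.mem_univ (choice σ hσ.2 s))
      rw [h1] at this
      linarith [hsum, this]
    have := (Finset.sum_eq_zero_iff_of_nonneg
      (fun b _ => σ.nonneg (s, ([] : List (A × S))) b)).1 h2 a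
      (Finset.mem_erase.2 ⟨h, Finset.mem_univ a⟩)
    exact this

lemma choice_enabled (σ : Scheduler M) (hσ : σ.MD) (s : S) :
    M.Enabled s (choice σ hσ.2 s) := by
  by_contra h
  have := σ.not_enabled (s, ([] : List (A × S))) (choice σ hσ.2 s) (by rwa [fpLast_nil])
  rw [choice_spec] at this
  norm_num at this

lemma stepExp_md (σ : Scheduler M) (hσ : σ.MD) (p : FPath S A) (g : FPath S A → ℝ) :
    stepExp M σ p g = ∑ s', M.P (fpLast p) (choice σ hσ.2 (fpLast p)) s' *
      g (fpExt p (choice σ hσ.2 (fpLast p)) s') := by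
  unfold stepExp
  rw [tsum_fintype]
  have hinner : ∀ a : A, (∑' s', σ.act p a * M.P (fpLast p) a s' * g (fpExt p a s')) =
      if a = choice σ hσ.2 (fpLast p) then
        ∑ s', M.P (fpLast p) a s' * g (fpExt p a s') else 0 := by
    intro a
    rw [tsum_fin]
    by_cases h : a = choice σ hσ.2 (fpLast p)
    · rw [if_pos h]
      apply Finset.sum_congr rfl
      intro s' _
      rw [act_eq_ite σ hσ, if_pos h, one_mul]
    · rw [if_neg h]
      apply Finset.sum_eq_zero
      intro s' _
      rw [act_eq_ite σ hσ, if_neg h, zero_mul, zero_mul]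
  calc (∑ a, ∑' s', σ.act p a * M.P (fpLast p) a s' * g (fpExt p a s'))
      = ∑ a, if a = choice σ hσ.2 (fpLast p) then
          ∑ s', M.P (fpLast p) a s' * g (fpExt p a s') else 0 :=
        Finset.sum_congr rfl (fun a _ => hinner a)
    _ = _ := by rw [Finset.sum_ite_eq' Finset.univ, if_pos (Finset.mem_univ _)]

lemma reachN_eq_of_last (σ : Scheduler M) (hσ : σ.MD) (T : Set S) :
    ∀ (n : ℕ) (p : FPath S A),
      reachN M σ T n p = reachN M σ T n ((fpLast p, ([] : List (A × S))) : FPath S A) := by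
  intro n
  induction n with
  | zero => intro p; simp [reachN, fpLast_nil] <;> rfl
  | succ n ih =>
    intro p
    simp only [reachN]; rw [fpLast_nil]
    by_cases h : fpLast p ∈ T
    · rw [if_pos h, if_pos h]
    · rw [if_neg h, if_neg h]
      rw [stepExp_md σ hσ, stepExp_md σ hσ]
      rw [fpLast_nil]
      apply Finset.sum_congr rfl
      intro s' _
      rw [ih (fpExt p (choice σ hσ.2 (fpLast p)) s'),
          ih (fpExt ((fpLast p, ([] : List (A × S))) : FPath S A) (choice σ hσ.2 (fpLast p)) s'),
          fpLast_ext, fpLast_ext]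

/-- Value function of an MD scheduler. -/
def val (σ : Scheduler M) (T : Set S) (n : ℕ) (s : S) : ℝ :=
  reachN M σ T n ((s, ([] : List (A × S))) : FPath S A)

lemma val_zero (σ : Scheduler M) (T : Set S) (s : S) :
    val σ T 0 s = if s ∈ T then 1 else 0 := by
  simp [val, reachN, fpLast_nil] <;> rfl

lemma val_succ (σ : Scheduler M) (hσ : σ.MD) (T : Set S) (n : ℕ) (s : S) :
    val σ T (n + 1) s = if s ∈ T then 1
      else ∑ s', M.P s (choice σ hσ.2 s) s' * val σ T n s' := by
  simp only [val, reachN]; rw [fpLast_nil]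
  by_cases h : s ∈ T
  · rw [if_pos h, if_pos h]
  · rw [if_neg h, if_neg h, stepExp_md σ hσ, fpLast_nil]
    apply Finset.sum_congr rfl
    intro s' _
    rw [reachN_eq_of_last σ hσ T n (fpExt _ _ _), fpLast_ext]

lemma val_nonneg (σ : Scheduler M) (hσ : σ.MD) (T : Set S) :
    ∀ (n : ℕ) (s : S), 0 ≤ val σ T n s := by
  intro n
  induction n with
  | zero => intro s; rw [val_zero]; split <;> norm_num
  | succ n ih =>
    intro s
    rw [val_succ σ hσ]
    split
    · norm_num
    · exact Finset.sum_nonneg (fun s' _ => mul_nonneg (M.nonneg _ _ _) (ih s'))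

lemma val_le_one (σ : Scheduler M) (hσ : σ.MD) (T : Set S) :
    ∀ (n : ℕ) (s : S), val σ T n s ≤ 1 := by
  intro n
  induction n with
  | zero => intro s; rw [val_zero]; split <;> norm_num
  | succ n ih =>
    intro s
    rw [val_succ σ hσ]
    split
    · exact le_refl 1
    · calc ∑ s', M.P s (choice σ hσ.2 s) s' * val σ T n s'
          ≤ ∑ s', M.P s (choice σ hσ.2 s) s' * 1 :=
            Finset.sum_le_sum (fun s' _ =>
              mul_le_mul_of_nonneg_left (ih s') (M.nonneg _ _ _))
      _ = ∑ s', M.P s (choice σ hσ.2 s) s' := by simp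
      _ ≤ 1 := sumP_le_one s _

lemma val_mono_succ (σ : Scheduler M) (hσ : σ.MD) (T : Set S) :
    ∀ (n : ℕ) (s : S), val σ T n s ≤ val σ T (n + 1) s := by
  intro n
  induction n with
  | zero =>
    intro s
    rw [val_zero, val_succ σ hσ]
    by_cases h : s ∈ T
    · rw [if_pos h, if_pos h]
    · rw [if_neg h, if_neg h]
      exact Finset.sum_nonneg (fun s' _ =>
        mul_nonneg (M.nonneg _ _ _) (val_nonneg σ hσ T 0 s'))
  | succ n ih =>
    intro s
    rw [val_succ σ hσ, val_succ σ hσ]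
    by_cases h : s ∈ T
    · rw [if_pos h, if_pos h]
    · rw [if_neg h, if_neg h]
      exact Finset.sum_le_sum (fun s' _ =>
        mul_le_mul_of_nonneg_left (ih s') (M.nonneg _ _ _))

lemma val_mono (σ : Scheduler M) (hσ : σ.MD) (T : Set S) (s : S) :
    Monotone (fun n => val σ T n s) :=
  monotone_nat_of_le_succ (fun n => val_mono_succ σ hσ T n s)

lemma reachProb_eq_of (σ : Scheduler M) (T : Set S) (s : S) (c : ℝ) (n0 : ℕ)
    (h1 : ∀ n, val σ T n s ≤ c) (h2 : val σ T n0 s = c) :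
    reachProb M σ s T = c := by
  have hbdd : BddAbove (Set.range fun n => val σ T n s) := by
    refine ⟨c, ?_⟩
    rintro x ⟨n, rfl⟩
    exact h1 n
  refine le_antisymm (ciSup_le h1) ?_
  calc c = val σ T n0 s := h2.symm
    _ ≤ ⨆ n, val σ T n s := le_ciSup hbdd n0

/-! ### Specific facts about the Hamiltonian MDP -/

instance : Fintype HX :=
  ⟨{HX.s0, HX.bot, HX.sa, HX.sb}, by intro x; cases x <;> simp⟩

section Specific

variable {V : Type} [Fintype V] [DecidableEq V] {N : ℕ} {E : Set (V × V)} {vinit : V}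
  {M : MDP (HSt V N) (HAct V E)}

lemma hspec (hM : IsHamiltonMDP N E vinit M) :
    ∀ (x : HSt V N) (a : HAct V E) (y : HSt V N), M.P x a y ≠ 0 →
    (x = hs0 ∧ a = hτ ∧ (y = hv vinit ∨ ∃ h1 : 0 < N - 1, y = hu ⟨0, h1⟩)) ∨
    (∃ i : Fin (N - 1), x = hu i ∧ a = hτ ∧
        (y = hbot ∨ (∃ h : i.1 + 1 < N - 1, y = hu ⟨i.1 + 1, h⟩) ∨ (i.1 + 1 = N - 1 ∧ y = hsb))) ∨
    (∃ e : {e : V × V // e ∈ E}, x = hv e.1.1 ∧ a = Sum.inl e ∧ (y = hv e.1.2 ∨ y = hbot)) ∨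
    (∃ v : V, x = hv v ∧ a = hτ ∧ y = hsa) ∨
    (x = hbot ∧ a = hτ ∧ y = hbot) ∨
    (x = hsa ∧ a = hτ ∧ y = hsa) ∨
    (x = hsb ∧ a = hτ ∧ y = hsb) :=
  hM.2.2.2.2.2.2.2.2.2.2

-- zero lemmas
lemma Z1 (hM : IsHamiltonMDP N E vinit M) (h1 : 0 < N - 1) (y : HSt V N)
    (hy1 : y ≠ hv vinit) (hy2 : y ≠ hu ⟨0, h1⟩) : M.P hs0 hτ y = 0 := by
  by_contra h
  rcases hspec hM _ _ _ h with h' | h' | h' | h' | h' | h' | h' <;>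
    simp_all [hs0, hbot, hsa, hsb, hu, hv, hτ]

lemma Z2 (hM : IsHamiltonMDP N E vinit M) (e : {e : V × V // e ∈ E}) (y : HSt V N) :
    M.P hs0 (Sum.inl e) y = 0 := by
  by_contra h
  rcases hspec hM _ _ _ h with h' | h' | h' | h' | h' | h' | h' <;>
    simp_all [hs0, hbot, hsa, hsb, hu, hv, hτ]

lemma Z3 (hM : IsHamiltonMDP N E vinit M) (i : Fin (N - 1)) (hlt : i.1 + 1 < N - 1)
    (y : HSt V N) (hy1 : y ≠ hbot) (hy2 : y ≠ hu ⟨i.1 + 1, hlt⟩) : M.P (hu i) hτ y = 0 := by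
  by_contra h
  rcases hspec hM _ _ _ h with ⟨hx,-,-⟩ | ⟨i',hx,ha,hy⟩ | ⟨e',hx,-,-⟩ | ⟨v',hx,-,-⟩ | ⟨hx,-,-⟩ | ⟨hx,-,-⟩ | ⟨hx,-,-⟩
  · exact absurd hx (by simp [hu, hs0])
  · have hii : i = i' := by simpa [hu] using hx
    rcases hy with hyy | ⟨h2, hyy⟩ | ⟨heq, hyy⟩
    · exact hy1 hyy
    · subst hii; exact hy2 hyy
    · subst hii; omega
  · exact absurd hx (by simp [hu, hv])
  · exact absurd hx (by simp [hu, hv])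
  · exact absurd hx (by simp [hu, hbot])
  · exact absurd hx (by simp [hu, hsa])
  · exact absurd hx (by simp [hu, hsb])

lemma Z4 (hM : IsHamiltonMDP N E vinit M) (i : Fin (N - 1)) (heq : i.1 + 1 = N - 1)
    (y : HSt V N) (hy1 : y ≠ hbot) (hy2 : y ≠ hsb) : M.P (hu i) hτ y = 0 := by
  by_contra h
  rcases hspec hM _ _ _ h with ⟨hx,-,-⟩ | ⟨i',hx,ha,hy⟩ | ⟨e',hx,-,-⟩ | ⟨v',hx,-,-⟩ | ⟨hx,-,-⟩ | ⟨hx,-,-⟩ | ⟨hx,-,-⟩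
  · exact absurd hx (by simp [hu, hs0])
  · have hii : i = i' := by simpa [hu] using hx
    rcases hy with hyy | ⟨h2, hyy⟩ | ⟨heq2, hyy⟩
    · exact hy1 hyy
    · subst hii; omega
    · exact hy2 hyy
  · exact absurd hx (by simp [hu, hv])
  · exact absurd hx (by simp [hu, hv])
  · exact absurd hx (by simp [hu, hbot])
  · exact absurd hx (by simp [hu, hsa])
  · exact absurd hx (by simp [hu, hsb])

lemma Z5 (hM : IsHamiltonMDP N E vinit M) (i : Fin (N - 1)) (e : {e : V × V // e ∈ E})
    (y : HSt V N) : M.P (hu i) (Sum.inl e) y = 0 := by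
  by_contra h
  rcases hspec hM _ _ _ h with h' | h' | h' | h' | h' | h' | h' <;>
    simp_all [hs0, hbot, hsa, hsb, hu, hv, hτ]

lemma Z6 (hM : IsHamiltonMDP N E vinit M) (v : V) (y : HSt V N) (hy : y ≠ hsa) :
    M.P (hv v) hτ y = 0 := by
  by_contra h
  rcases hspec hM _ _ _ h with h' | h' | h' | h' | h' | h' | h' <;>
    simp_all [hs0, hbot, hsa, hsb, hu, hv, hτ]

lemma Z7 (hM : IsHamiltonMDP N E vinit M) (v : V) (e : {e : V × V // e ∈ E})
    (hev : e.1.1 = v) (y : HSt V N) (hy1 : y ≠ hv e.1.2) (hy2 : y ≠ hbot) :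
    M.P (hv v) (Sum.inl e) y = 0 := by
  by_contra h
  rcases hspec hM _ _ _ h with ⟨hx,ha,-⟩ | ⟨i',hx,-,-⟩ | ⟨e',hx,ha,hy⟩ | ⟨v',hx,ha,-⟩ | ⟨hx,-,-⟩ | ⟨hx,-,-⟩ | ⟨hx,-,-⟩
  · exact absurd ha (by simp [hτ])
  · exact absurd hx (by simp [hu, hv])
  · have hee : e' = e := (by simpa using ha : e = e').symm
    subst hee
    rcases hy with hyy | hyy
    · exact hy1 hyy
    · exact hy2 hyy
  · exact absurd ha (by simp [hτ])
  · exact absurd hx (by simp [hv, hbot])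
  · exact absurd hx (by simp [hv, hsa])
  · exact absurd hx (by simp [hv, hsb])

lemma Z8 (hM : IsHamiltonMDP N E vinit M) (v : V) (e : {e : V × V // e ∈ E})
    (hev : e.1.1 ≠ v) (y : HSt V N) : M.P (hv v) (Sum.inl e) y = 0 := by
  by_contra h
  rcases hspec hM _ _ _ h with ⟨hx,ha,-⟩ | ⟨i',hx,-,-⟩ | ⟨e',hx,ha,hy⟩ | ⟨v',hx,ha,-⟩ | ⟨hx,-,-⟩ | ⟨hx,-,-⟩ | ⟨hx,-,-⟩
  · exact absurd ha (by simp [hτ])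
  · exact absurd hx (by simp [hu, hv])
  · have hee : e' = e := (by simpa using ha : e = e').symm
    subst hee
    exact hev (by simpa [hv] using hx.symm)
  · exact absurd ha (by simp [hτ])
  · exact absurd hx (by simp [hv, hbot])
  · exact absurd hx (by simp [hv, hsa])
  · exact absurd hx (by simp [hv, hsb])

lemma Z9 (hM : IsHamiltonMDP N E vinit M) (y : HSt V N) (hy : y ≠ hbot) :
    M.P hbot hτ y = 0 := by
  by_contra h
  rcases hspec hM _ _ _ h with h' | h' | h' | h' | h' | h' | h' <;>
    simp_all [hs0, hbot, hsa, hsb, hu, hv, hτ]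

lemma Z10 (hM : IsHamiltonMDP N E vinit M) (y : HSt V N) (hy : y ≠ hsa) :
    M.P hsa hτ y = 0 := by
  by_contra h
  rcases hspec hM _ _ _ h with h' | h' | h' | h' | h' | h' | h' <;>
    simp_all [hs0, hbot, hsa, hsb, hu, hv, hτ]

lemma Z11 (hM : IsHamiltonMDP N E vinit M) (y : HSt V N) (hy : y ≠ hsb) :
    M.P hsb hτ y = 0 := by
  by_contra h
  rcases hspec hM _ _ _ h with h' | h' | h' | h' | h' | h' | h' <;>
    simp_all [hs0, hbot, hsa, hsb, hu, hv, hτ]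

lemma Z12 (hM : IsHamiltonMDP N E vinit M) (e : {e : V × V // e ∈ E}) (x : HX)
    (y : HSt V N) : M.P (Sum.inr (Sum.inl x)) (Sum.inl e) y = 0 := by
  by_contra h
  rcases hspec hM _ _ _ h with h' | h' | h' | h' | h' | h' | h' <;>
    simp_all [hs0, hbot, hsa, hsb, hu, hv, hτ]

end Specific

section Specific2

variable {V : Type} [Fintype V] [DecidableEq V] {N : ℕ} {E : Set (V × V)} {vinit : V}
  {M : MDP (HSt V N) (HAct V E)}

lemma notEnabled_of_allzero {s : HSt V N} {a : HAct V E} (h : ∀ y, M.P s a y = 0) :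
    ¬ M.Enabled s a := by
  intro hen
  rw [MDP.Enabled, tsum_fin, Finset.sum_eq_zero (fun y _ => h y)] at hen
  norm_num at hen

lemma enabled_of_two {s : HSt V N} {a : HAct V E} {y1 y2 : HSt V N} (h12 : y1 ≠ y2)
    (h1 : M.P s a y1 = 1/2) (h2 : M.P s a y2 = 1/2)
    (h0 : ∀ y, y ≠ y1 → y ≠ y2 → M.P s a y = 0) : M.Enabled s a := by
  rw [MDP.Enabled, tsum_fin, sum_two _ y1 y2 h12 h0, h1, h2]
  norm_num

lemma enabled_of_single {s : HSt V N} {a : HAct V E} {y1 : HSt V N}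
    (h1 : M.P s a y1 = 1) (h0 : ∀ y, y ≠ y1 → M.P s a y = 0) : M.Enabled s a := by
  rw [MDP.Enabled, tsum_fin, sum_single _ y1 h0, h1]

lemma hNpos (hN : 2 ≤ N) : 0 < N - 1 := by omega

lemma en_s0_tau (hM : IsHamiltonMDP N E vinit M) (hN : 2 ≤ N) :
    M.Enabled hs0 (hτ : HAct V E) :=
  enabled_of_two (by simp [hv, hu]) hM.1 (hM.2.1 (hNpos hN)) (Z1 hM (hNpos hN))

lemma notEn_s0_e (hM : IsHamiltonMDP N E vinit M) (e : {e : V × V // e ∈ E}) :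
    ¬ M.Enabled (hs0 : HSt V N) (Sum.inl e) :=
  notEnabled_of_allzero (Z2 hM e)

lemma en_u_tau (hM : IsHamiltonMDP N E vinit M) (i : Fin (N - 1)) :
    M.Enabled (hu i) (hτ : HAct V E) := by
  by_cases hlt : i.1 + 1 < N - 1
  · exact enabled_of_two (by simp [hbot, hu]) (hM.2.2.2.2.1 i)
      (hM.2.2.1 i hlt) (Z3 hM i hlt)
  · have heq : i.1 + 1 = N - 1 := by omega
    exact enabled_of_two (by simp [hbot, hsb]) (hM.2.2.2.2.1 i)
      (hM.2.2.2.1 i heq) (Z4 hM i heq)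

lemma notEn_u_e (hM : IsHamiltonMDP N E vinit M) (i : Fin (N - 1))
    (e : {e : V × V // e ∈ E}) : ¬ M.Enabled (hu i) (Sum.inl e) :=
  notEnabled_of_allzero (Z5 hM i e)

lemma en_v_tau (hM : IsHamiltonMDP N E vinit M) (v : V) :
    M.Enabled (hv v : HSt V N) (hτ : HAct V E) :=
  enabled_of_single (hM.2.2.2.2.2.2.1 v) (Z6 hM v)

lemma en_v_e (hM : IsHamiltonMDP N E vinit M) (v : V) (e : {e : V × V // e ∈ E})
    (hev : e.1.1 = v) : M.Enabled (hv v : HSt V N) (Sum.inl e) := by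
  refine enabled_of_two (by simp [hv, hbot]) ?_ ?_ (Z7 hM v e hev)
  · rw [← hev]; exact (hM.2.2.2.2.2.1 e).1
  · rw [← hev]; exact (hM.2.2.2.2.2.1 e).2

lemma notEn_v_e (hM : IsHamiltonMDP N E vinit M) (v : V) (e : {e : V × V // e ∈ E})
    (hev : e.1.1 ≠ v) : ¬ M.Enabled (hv v : HSt V N) (Sum.inl e) :=
  notEnabled_of_allzero (Z8 hM v e hev)

lemma en_bot_tau (hM : IsHamiltonMDP N E vinit M) :
    M.Enabled (hbot : HSt V N) (hτ : HAct V E) :=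
  enabled_of_single hM.2.2.2.2.2.2.2.1 (Z9 hM)

lemma en_sa_tau (hM : IsHamiltonMDP N E vinit M) :
    M.Enabled (hsa : HSt V N) (hτ : HAct V E) :=
  enabled_of_single hM.2.2.2.2.2.2.2.2.1 (Z10 hM)

lemma en_sb_tau (hM : IsHamiltonMDP N E vinit M) :
    M.Enabled (hsb : HSt V N) (hτ : HAct V E) :=
  enabled_of_single hM.2.2.2.2.2.2.2.2.2.1 (Z11 hM)

lemma notEn_x_e (hM : IsHamiltonMDP N E vinit M) (x : HX) (e : {e : V × V // e ∈ E}) :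
    ¬ M.Enabled (Sum.inr (Sum.inl x) : HSt V N) (Sum.inl e) :=
  notEnabled_of_allzero (Z12 hM e x)

lemma choice_tau_of (σ : Scheduler M) (hσ : σ.MD) (s : HSt V N)
    (hne : ∀ e, ¬ M.Enabled s (Sum.inl e)) : choice σ hσ.2 s = hτ := by
  have hen := choice_enabled σ hσ s
  rcases h : choice σ hσ.2 s with e | u
  · rw [h] at hen; exact absurd hen (hne e)
  · cases u; rfl

lemma choice_s0 (hM : IsHamiltonMDP N E vinit M) (σ : Scheduler M) (hσ : σ.MD) :
    choice σ hσ.2 (hs0 : HSt V N) = hτ :=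
  choice_tau_of σ hσ _ (fun e => notEn_s0_e hM e)

lemma choice_u (hM : IsHamiltonMDP N E vinit M) (σ : Scheduler M) (hσ : σ.MD)
    (i : Fin (N - 1)) : choice σ hσ.2 (hu i : HSt V N) = hτ :=
  choice_tau_of σ hσ _ (fun e => notEn_u_e hM i e)

lemma choice_bot (hM : IsHamiltonMDP N E vinit M) (σ : Scheduler M) (hσ : σ.MD) :
    choice σ hσ.2 (hbot : HSt V N) = hτ :=
  choice_tau_of σ hσ _ (fun e => notEn_x_e hM _ e)

lemma choice_sa (hM : IsHamiltonMDP N E vinit M) (σ : Scheduler M) (hσ : σ.MD) :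
    choice σ hσ.2 (hsa : HSt V N) = hτ :=
  choice_tau_of σ hσ _ (fun e => notEn_x_e hM _ e)

lemma choice_sb (hM : IsHamiltonMDP N E vinit M) (σ : Scheduler M) (hσ : σ.MD) :
    choice σ hσ.2 (hsb : HSt V N) = hτ :=
  choice_tau_of σ hσ _ (fun e => notEn_x_e hM _ e)

lemma choice_v (hM : IsHamiltonMDP N E vinit M) (σ : Scheduler M) (hσ : σ.MD) (v : V) :
    choice σ hσ.2 (hv v : HSt V N) = hτ ∨
      ∃ e : {e : V × V // e ∈ E}, choice σ hσ.2 (hv v : HSt V N) = Sum.inl e ∧ e.1.1 = v := by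
  have hen := choice_enabled σ hσ (hv v : HSt V N)
  rcases h : choice σ hσ.2 (hv v : HSt V N) with e | u
  · right
    refine ⟨e, rfl, ?_⟩
    by_contra hev
    rw [h] at hen
    exact notEn_v_e hM v e hev hen
  · left; cases u; rfl

end Specific2

section TargetB

variable {V : Type} [Fintype V] [DecidableEq V] {N : ℕ} {E : Set (V × V)} {vinit : V}
  {M : MDP (HSt V N) (HAct V E)}

lemma VB_sb (σ : Scheduler M) (hσ : σ.MD) (n : ℕ) :
    val σ {hsb} n (hsb : HSt V N) = 1 := by
  have hmem : (hsb : HSt V N) ∈ ({hsb} : Set (HSt V N)) := rfl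
  cases n with
  | zero => rw [val_zero, if_pos hmem]
  | succ n => rw [val_succ σ hσ, if_pos hmem]

lemma VB_zero3 (hM : IsHamiltonMDP N E vinit M) (σ : Scheduler M) (hσ : σ.MD) :
    ∀ n : ℕ, val σ {hsb} n (hbot : HSt V N) = 0 ∧ val σ {hsb} n (hsa : HSt V N) = 0 ∧
      ∀ v : V, val σ {hsb} n (hv v : HSt V N) = 0 := by
  intro n
  induction n with
  | zero =>
    refine ⟨?_, ?_, fun v => ?_⟩ <;>
      rw [val_zero, if_neg (by simp [Set.mem_singleton_iff, hbot, hsa, hsb, hv])]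
  | succ n ih =>
    obtain ⟨ihb, iha, ihv⟩ := ih
    refine ⟨?_, ?_, fun v => ?_⟩
    · rw [val_succ σ hσ, if_neg (by simp [Set.mem_singleton_iff, hbot, hsb]),
        choice_bot hM σ hσ,
        sum_single _ hbot (fun y hy => by rw [Z9 hM y hy, zero_mul]),
        hM.2.2.2.2.2.2.2.1, ihb, one_mul]
    · rw [val_succ σ hσ, if_neg (by simp [Set.mem_singleton_iff, hsa, hsb]),
        choice_sa hM σ hσ,
        sum_single _ hsa (fun y hy => by rw [Z10 hM y hy, zero_mul]),
        hM.2.2.2.2.2.2.2.2.1, iha, one_mul]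
    · rw [val_succ σ hσ, if_neg (by simp [Set.mem_singleton_iff, hv, hsb])]
      rcases choice_v hM σ hσ v with hc | ⟨e, hc, hev⟩
      · rw [hc, sum_single _ hsa (fun y hy => by rw [Z6 hM v y hy, zero_mul]),
          hM.2.2.2.2.2.2.1 v, iha, one_mul]
      · subst hev
        rw [hc, sum_two _ (hv e.1.2) hbot (by simp [hv, hbot])
            (fun y h1 h2 => by rw [Z7 hM _ e rfl y h1 h2, zero_mul]),
          (hM.2.2.2.2.2.1 e).1, (hM.2.2.2.2.2.1 e).2, ihv, ihb]
        ring

lemma VB_u (hM : IsHamiltonMDP N E vinit M) (σ : Scheduler M) (hσ : σ.MD) :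
    ∀ (n : ℕ) (i : Fin (N - 1)), val σ {hsb} n (hu i : HSt V N) =
      if N - 1 - i.1 ≤ n then ((2:ℝ)⁻¹) ^ (N - 1 - i.1) else 0 := by
  intro n
  induction n with
  | zero =>
    intro i
    have hi := i.2
    rw [val_zero, if_neg (by simp [Set.mem_singleton_iff, hu, hsb]),
      if_neg (by omega : ¬ N - 1 - i.1 ≤ 0)]
  | succ n ih =>
    intro i
    have hi := i.2
    rw [val_succ σ hσ, if_neg (by simp [Set.mem_singleton_iff, hu, hsb]),
      choice_u hM σ hσ i]
    by_cases hlt : i.1 + 1 < N - 1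
    · rw [sum_two _ hbot (hu ⟨i.1 + 1, hlt⟩) (by simp [hbot, hu])
          (fun y h1 h2 => by rw [Z3 hM i hlt y h1 h2, zero_mul]),
        hM.2.2.2.2.1 i, hM.2.2.1 i hlt, (VB_zero3 hM σ hσ n).1]
      have ihx : val σ {hsb} n (hu ⟨i.1 + 1, hlt⟩ : HSt V N) =
          if N - 1 - (i.1 + 1) ≤ n then ((2:ℝ)⁻¹) ^ (N - 1 - (i.1 + 1)) else 0 :=
        ih ⟨i.1 + 1, hlt⟩
      rw [ihx]
      by_cases hc : N - 1 - (i.1 + 1) ≤ n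
      · rw [if_pos hc, if_pos (by omega : N - 1 - i.1 ≤ n + 1)]
        have hk : N - 1 - i.1 = (N - 1 - (i.1 + 1)) + 1 := by omega
        rw [hk, pow_succ]; ring
      · rw [if_neg hc, if_neg (by omega : ¬ N - 1 - i.1 ≤ n + 1)]; ring
    · have heq : i.1 + 1 = N - 1 := by omega
      rw [sum_two _ hbot hsb (by simp [hbot, hsb])
          (fun y h1 h2 => by rw [Z4 hM i heq y h1 h2, zero_mul]),
        hM.2.2.2.2.1 i, hM.2.2.2.1 i heq, (VB_zero3 hM σ hσ n).1, VB_sb σ hσ n]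
      have hk : N - 1 - i.1 = 1 := by omega
      rw [hk, if_pos (by omega : 1 ≤ n + 1)]
      norm_num

lemma VB_s0 (hM : IsHamiltonMDP N E vinit M) (hN : 2 ≤ N) (σ : Scheduler M) (hσ : σ.MD) :
    ∀ n : ℕ, val σ {hsb} n (hs0 : HSt V N) =
      if N ≤ n then ((2:ℝ)⁻¹) ^ N else 0 := by
  intro n
  cases n with
  | zero =>
    rw [val_zero, if_neg (by simp [Set.mem_singleton_iff, hs0, hsb]),
      if_neg (by omega : ¬ N ≤ 0)]
  | succ n =>
    rw [val_succ σ hσ, if_neg (by simp [Set.mem_singleton_iff, hs0, hsb]),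
      choice_s0 hM σ hσ,
      sum_two _ (hv vinit) (hu ⟨0, hNpos hN⟩) (by simp [hv, hu])
        (fun y h1 h2 => by rw [Z1 hM (hNpos hN) y h1 h2, zero_mul]),
      hM.1, hM.2.1 (hNpos hN), (VB_zero3 hM σ hσ n).2.2 vinit]
    have ihx : val σ {hsb} n (hu ⟨0, hNpos hN⟩ : HSt V N) =
        if N - 1 - 0 ≤ n then ((2:ℝ)⁻¹) ^ (N - 1 - 0) else 0 :=
      VB_u hM σ hσ n ⟨0, hNpos hN⟩
    rw [ihx]
    by_cases hc : N - 1 - 0 ≤ n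
    · rw [if_pos hc, if_pos (by omega : N ≤ n + 1)]
      have hk : ((2:ℝ)⁻¹) ^ N = ((2:ℝ)⁻¹) ^ (N - 1 - 0) * 2⁻¹ := by
        rw [← pow_succ]; congr 1; omega
      rw [hk]; ring
    · rw [if_neg hc, if_neg (by omega : ¬ N ≤ n + 1)]; ring

lemma reachB (hM : IsHamiltonMDP N E vinit M) (hN : 2 ≤ N) (σ : Scheduler M) (hσ : σ.MD) :
    reachProb M σ (hs0 : HSt V N) {hsb} = ((2:ℝ)⁻¹) ^ N := by
  refine reachProb_eq_of σ _ _ _ N (fun n => ?_) ?_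
  · rw [VB_s0 hM hN σ hσ n]
    split_ifs
    · exact le_refl _
    · positivity
  · rw [VB_s0 hM hN σ hσ N, if_pos (le_refl N)]

end TargetB

section TargetA

variable {V : Type} [Fintype V] [DecidableEq V] {N : ℕ} {E : Set (V × V)} {vinit : V}
  {M : MDP (HSt V N) (HAct V E)}

lemma VA_sa (σ : Scheduler M) (hσ : σ.MD) (n : ℕ) :
    val σ {hsa} n (hsa : HSt V N) = 1 := by
  have hmem : (hsa : HSt V N) ∈ ({hsa} : Set (HSt V N)) := rfl
  cases n with
  | zero => rw [val_zero, if_pos hmem]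
  | succ n => rw [val_succ σ hσ, if_pos hmem]

lemma VA_zero3 (hM : IsHamiltonMDP N E vinit M) (σ : Scheduler M) (hσ : σ.MD) :
    ∀ n : ℕ, val σ {hsa} n (hbot : HSt V N) = 0 ∧ val σ {hsa} n (hsb : HSt V N) = 0 ∧
      ∀ i : Fin (N - 1), val σ {hsa} n (hu i : HSt V N) = 0 := by
  intro n
  induction n with
  | zero =>
    refine ⟨?_, ?_, fun i => ?_⟩ <;>
      rw [val_zero, if_neg (by simp [Set.mem_singleton_iff, hbot, hsa, hsb, hu])]
  | succ n ih =>
    obtain ⟨ihb, ihsb, ihu⟩ := ih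
    refine ⟨?_, ?_, fun i => ?_⟩
    · rw [val_succ σ hσ, if_neg (by simp [Set.mem_singleton_iff, hbot, hsa]),
        choice_bot hM σ hσ,
        sum_single _ hbot (fun y hy => by rw [Z9 hM y hy, zero_mul]),
        hM.2.2.2.2.2.2.2.1, ihb, one_mul]
    · rw [val_succ σ hσ, if_neg (by simp [Set.mem_singleton_iff, hsb, hsa]),
        choice_sb hM σ hσ,
        sum_single _ hsb (fun y hy => by rw [Z11 hM y hy, zero_mul]),
        hM.2.2.2.2.2.2.2.2.2.1, ihsb, one_mul]
    · rw [val_succ σ hσ, if_neg (by simp [Set.mem_singleton_iff, hu, hsa]),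
        choice_u hM σ hσ i]
      by_cases hlt : i.1 + 1 < N - 1
      · rw [sum_two _ hbot (hu ⟨i.1 + 1, hlt⟩) (by simp [hbot, hu])
            (fun y h1 h2 => by rw [Z3 hM i hlt y h1 h2, zero_mul]),
          hM.2.2.2.2.1 i, hM.2.2.1 i hlt, ihb, ihu ⟨i.1 + 1, hlt⟩]
        ring
      · have heq : i.1 + 1 = N - 1 := by omega
        rw [sum_two _ hbot hsb (by simp [hbot, hsb])
            (fun y h1 h2 => by rw [Z4 hM i heq y h1 h2, zero_mul]),
          hM.2.2.2.2.1 i, hM.2.2.2.1 i heq, ihb, ihsb]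
        ring

lemma VA_w (hM : IsHamiltonMDP N E vinit M) (σ : Scheduler M) (hσ : σ.MD)
    (w : ℕ → V) (k0 : ℕ)
    (hτk : choice σ hσ.2 (hv (w k0) : HSt V N) = hτ)
    (hedge : ∀ k, k < k0 → ∃ h : (w k, w (k + 1)) ∈ E,
      choice σ hσ.2 (hv (w k) : HSt V N) = Sum.inl ⟨(w k, w (k + 1)), h⟩) :
    ∀ n j, j ≤ k0 → val σ {hsa} n (hv (w j) : HSt V N) =
      if k0 - j + 1 ≤ n then ((2:ℝ)⁻¹) ^ (k0 - j) else 0 := by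
  intro n
  induction n with
  | zero =>
    intro j hj
    rw [val_zero, if_neg (by simp [Set.mem_singleton_iff, hv, hsa]),
      if_neg (by omega : ¬ k0 - j + 1 ≤ 0)]
  | succ n ih =>
    intro j hj
    rw [val_succ σ hσ, if_neg (by simp [Set.mem_singleton_iff, hv, hsa])]
    rcases eq_or_lt_of_le hj with rfl | hjlt
    · rw [hτk, sum_single _ hsa (fun y hy => by rw [Z6 hM _ y hy, zero_mul]),
        hM.2.2.2.2.2.2.1 (w j), VA_sa σ hσ n, one_mul,
        Nat.sub_self, if_pos (by omega : 0 + 1 ≤ n + 1), pow_zero]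
    · obtain ⟨hE, hc⟩ := hedge j hjlt
      rw [hc]
      have hP1 : M.P (hv (w j)) (Sum.inl ⟨(w j, w (j + 1)), hE⟩) (hv (w (j + 1))) = 1/2 :=
        (hM.2.2.2.2.2.1 ⟨(w j, w (j + 1)), hE⟩).1
      have hP2 : M.P (hv (w j)) (Sum.inl ⟨(w j, w (j + 1)), hE⟩) (hbot : HSt V N) = 1/2 :=
        (hM.2.2.2.2.2.1 ⟨(w j, w (j + 1)), hE⟩).2
      rw [sum_two _ (hv (w (j + 1))) hbot (by simp [hv, hbot])
          (fun y h1 h2 => by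
            rw [Z7 hM (w j) ⟨(w j, w (j + 1)), hE⟩ rfl y h1 h2, zero_mul]),
        hP1, hP2, (VA_zero3 hM σ hσ n).1, ih (j + 1) hjlt]
      by_cases hcnd : k0 - (j + 1) + 1 ≤ n
      · rw [if_pos hcnd, if_pos (by omega : k0 - j + 1 ≤ n + 1)]
        have hk : ((2:ℝ)⁻¹) ^ (k0 - j) = ((2:ℝ)⁻¹) ^ (k0 - (j + 1)) * 2⁻¹ := by
          rw [← pow_succ]; congr 1; omega
        rw [hk]; ring
      · rw [if_neg hcnd, if_neg (by omega : ¬ k0 - j + 1 ≤ n + 1)]; ring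

lemma VA_s0_w (hM : IsHamiltonMDP N E vinit M) (hN : 2 ≤ N) (σ : Scheduler M) (hσ : σ.MD)
    (w : ℕ → V) (k0 : ℕ) (hw0 : w 0 = vinit)
    (hτk : choice σ hσ.2 (hv (w k0) : HSt V N) = hτ)
    (hedge : ∀ k, k < k0 → ∃ h : (w k, w (k + 1)) ∈ E,
      choice σ hσ.2 (hv (w k) : HSt V N) = Sum.inl ⟨(w k, w (k + 1)), h⟩) :
    ∀ n, val σ {hsa} n (hs0 : HSt V N) =
      if k0 + 2 ≤ n then ((2:ℝ)⁻¹) ^ (k0 + 1) else 0 := by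
  intro n
  cases n with
  | zero =>
    rw [val_zero, if_neg (by simp [Set.mem_singleton_iff, hs0, hsa]),
      if_neg (by omega : ¬ k0 + 2 ≤ 0)]
  | succ n =>
    rw [val_succ σ hσ, if_neg (by simp [Set.mem_singleton_iff, hs0, hsa]),
      choice_s0 hM σ hσ,
      sum_two _ (hv vinit) (hu ⟨0, hNpos hN⟩) (by simp [hv, hu])
        (fun y h1 h2 => by rw [Z1 hM (hNpos hN) y h1 h2, zero_mul]),
      hM.1, hM.2.1 (hNpos hN), (VA_zero3 hM σ hσ n).2.2 ⟨0, hNpos hN⟩, ← hw0,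
      VA_w hM σ hσ w k0 hτk hedge n 0 (Nat.zero_le k0)]
    by_cases hcnd : k0 - 0 + 1 ≤ n
    · rw [if_pos hcnd, if_pos (by omega : k0 + 2 ≤ n + 1)]
      rw [pow_succ]
      have : k0 - 0 = k0 := by omega
      rw [this]; ring
    · rw [if_neg hcnd, if_neg (by omega : ¬ k0 + 2 ≤ n + 1)]; ring

lemma reachA_w (hM : IsHamiltonMDP N E vinit M) (hN : 2 ≤ N) (σ : Scheduler M) (hσ : σ.MD)
    (w : ℕ → V) (k0 : ℕ) (hw0 : w 0 = vinit)
    (hτk : choice σ hσ.2 (hv (w k0) : HSt V N) = hτ)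
    (hedge : ∀ k, k < k0 → ∃ h : (w k, w (k + 1)) ∈ E,
      choice σ hσ.2 (hv (w k) : HSt V N) = Sum.inl ⟨(w k, w (k + 1)), h⟩) :
    reachProb M σ (hs0 : HSt V N) {hsa} = ((2:ℝ)⁻¹) ^ (k0 + 1) := by
  refine reachProb_eq_of σ _ _ _ (k0 + 2) (fun n => ?_) ?_
  · rw [VA_s0_w hM hN σ hσ w k0 hw0 hτk hedge n]
    split_ifs
    · exact le_refl _
    · positivity
  · rw [VA_s0_w hM hN σ hσ w k0 hw0 hτk hedge (k0 + 2), if_pos (le_refl _)]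

lemma VA_w0 (hM : IsHamiltonMDP N E vinit M) (σ : Scheduler M) (hσ : σ.MD)
    (w : ℕ → V)
    (hedge : ∀ k, ∃ h : (w k, w (k + 1)) ∈ E,
      choice σ hσ.2 (hv (w k) : HSt V N) = Sum.inl ⟨(w k, w (k + 1)), h⟩) :
    ∀ n j, val σ {hsa} n (hv (w j) : HSt V N) = 0 := by
  intro n
  induction n with
  | zero =>
    intro j
    rw [val_zero, if_neg (by simp [Set.mem_singleton_iff, hv, hsa])]
  | succ n ih =>
    intro j
    rw [val_succ σ hσ, if_neg (by simp [Set.mem_singleton_iff, hv, hsa])]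
    obtain ⟨hE, hc⟩ := hedge j
    rw [hc]
    have hP1 : M.P (hv (w j)) (Sum.inl ⟨(w j, w (j + 1)), hE⟩) (hv (w (j + 1))) = 1/2 :=
      (hM.2.2.2.2.2.1 ⟨(w j, w (j + 1)), hE⟩).1
    have hP2 : M.P (hv (w j)) (Sum.inl ⟨(w j, w (j + 1)), hE⟩) (hbot : HSt V N) = 1/2 :=
      (hM.2.2.2.2.2.1 ⟨(w j, w (j + 1)), hE⟩).2
    rw [sum_two _ (hv (w (j + 1))) hbot (by simp [hv, hbot])
        (fun y h1 h2 => by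
          rw [Z7 hM (w j) ⟨(w j, w (j + 1)), hE⟩ rfl y h1 h2, zero_mul]),
      hP1, hP2, (VA_zero3 hM σ hσ n).1, ih (j + 1)]
    ring

lemma reachA_w0 (hM : IsHamiltonMDP N E vinit M) (hN : 2 ≤ N) (σ : Scheduler M) (hσ : σ.MD)
    (w : ℕ → V) (hw0 : w 0 = vinit)
    (hedge : ∀ k, ∃ h : (w k, w (k + 1)) ∈ E,
      choice σ hσ.2 (hv (w k) : HSt V N) = Sum.inl ⟨(w k, w (k + 1)), h⟩) :
    reachProb M σ (hs0 : HSt V N) {hsa} = 0 := by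
  have hs0val : ∀ n, val σ {hsa} n (hs0 : HSt V N) = 0 := by
    intro n
    cases n with
    | zero => rw [val_zero, if_neg (by simp [Set.mem_singleton_iff, hs0, hsa])]
    | succ n =>
      rw [val_succ σ hσ, if_neg (by simp [Set.mem_singleton_iff, hs0, hsa]),
        choice_s0 hM σ hσ,
        sum_two _ (hv vinit) (hu ⟨0, hNpos hN⟩) (by simp [hv, hu])
          (fun y h1 h2 => by rw [Z1 hM (hNpos hN) y h1 h2, zero_mul]),
        hM.1, hM.2.1 (hNpos hN), (VA_zero3 hM σ hσ n).2.2 ⟨0, hNpos hN⟩, ← hw0,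
        VA_w0 hM σ hσ w hedge n 0]
      ring
  exact reachProb_eq_of σ _ _ _ 0 (fun n => le_of_eq (hs0val n)) (hs0val 0)

end TargetA

section Construct

variable {V : Type} [Fintype V] [DecidableEq V] {N : ℕ} {E : Set (V × V)} {vinit : V}
  {M : MDP (HSt V N) (HAct V E)}

lemma choice_eq (σ : Scheduler M) (hσ : σ.MD) (s : HSt V N) (a : HAct V E)
    (h : σ.act (s, ([] : List (HAct V E × HSt V N))) a = 1) : choice σ hσ.2 s = a := by
  by_cases hc : a = choice σ hσ.2 s
  · exact hc.symm
  · have h2 := act_eq_ite σ hσ (s, ([] : List (HAct V E × HSt V N))) a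
    rw [fpLast_nil, if_neg hc] at h2
    rw [h2] at h
    norm_num at h

/-- The MD scheduler determined by a choice function `gSt`. -/
def mkMD (M : MDP (HSt V N) (HAct V E)) (gSt : HSt V N → HAct V E)
    (hen : ∀ s, M.Enabled s (gSt s)) : Scheduler M where
  act := fun p a => if a = gSt (fpLast p) then 1 else 0
  nonneg := by
    intro p a
    show (0:ℝ) ≤ if a = gSt (fpLast p) then 1 else 0
    split <;> norm_num
  sum_one := by
    intro p
    show (∑' a : HAct V E, if a = gSt (fpLast p) then (1:ℝ) else 0) = 1
    rw [tsum_fintype, Finset.sum_ite_eq' Finset.univ, if_pos (Finset.mem_univ _)]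
  not_enabled := by
    intro p a h
    show (if a = gSt (fpLast p) then (1:ℝ) else 0) = 0
    rw [if_neg]
    rintro rfl
    exact h (hen _)

lemma mkMD_MD (M : MDP (HSt V N) (HAct V E)) (gSt : HSt V N → HAct V E)
    (hen : ∀ s, M.Enabled s (gSt s)) : (mkMD M gSt hen).MD := by
  constructor
  · intro p
    funext a
    simp only [mkMD, fpLast_nil] <;> rfl
  · intro p
    exact ⟨gSt (fpLast p), if_pos rfl⟩

lemma mkMD_choice (M : MDP (HSt V N) (HAct V E)) (gSt : HSt V N → HAct V E)
    (hen : ∀ s, M.Enabled s (gSt s)) (s : HSt V N) :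
    choice (mkMD M gSt hen) (mkMD_MD M gSt hen).2 s = gSt s := by
  apply choice_eq _ (mkMD_MD M gSt hen)
  simp [mkMD, fpLast_nil]

/-- Vertex choice function induced by a candidate Hamiltonian path `l`. -/
def gV (N : ℕ) (E : Set (V × V)) (vinit : V) (l : List V) (v : V) : HAct V E :=
  if h : (v, l.getD (l.idxOf v + 1) vinit) ∈ E ∧ l.idxOf v + 1 < N
  then Sum.inl ⟨(v, l.getD (l.idxOf v + 1) vinit), h.1⟩ else hτ

def gSt (N : ℕ) (E : Set (V × V)) (vinit : V) (l : List V) : HSt V N → HAct V E :=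
  fun s => match s with
  | Sum.inl v => gV N E vinit l v
  | Sum.inr _ => hτ

lemma forward (hM : IsHamiltonMDP N E vinit M) (hN : 2 ≤ N)
    (l : List V) (hlen : l.length = N) (hnd : l.Nodup) (hhd : l.head? = some vinit)
    (hch : l.Chain' (fun a b => (a, b) ∈ E)) :
    ∃ σ : Scheduler M, σ.MD ∧
      reachProb M σ (hs0 : HSt V N) {hsa} = ((2:ℝ)⁻¹) ^ N ∧
      reachProb M σ (hs0 : HSt V N) {hsb} = ((2:ℝ)⁻¹) ^ N := by
  have hen : ∀ s : HSt V N, M.Enabled s (gSt N E vinit l s) := by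
    intro s
    match s with
    | Sum.inl v =>
      show M.Enabled (hv v) (gV N E vinit l v)
      rw [gV]
      split
      · exact en_v_e hM v _ rfl
      · exact en_v_tau hM v
    | Sum.inr (Sum.inl HX.s0) => exact en_s0_tau hM hN
    | Sum.inr (Sum.inl HX.bot) => exact en_bot_tau hM
    | Sum.inr (Sum.inl HX.sa) => exact en_sa_tau hM
    | Sum.inr (Sum.inl HX.sb) => exact en_sb_tau hM
    | Sum.inr (Sum.inr i) => exact en_u_tau hM i
  refine ⟨mkMD M (gSt N E vinit l) hen, mkMD_MD M (gSt N E vinit l) hen, ?_, ?_⟩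
  · -- reach {hsa} = 2⁻¹ ^ N
    set w : ℕ → V := fun j => l.getD j vinit with hw
    have hw0 : w 0 = vinit := by
      cases l with
      | nil => simp at hhd
      | cons a t =>
        simp only [List.head?_cons, Option.some.injEq] at hhd
        simp [hw, hhd]
    have hwj : ∀ (j : ℕ) (hj : j < l.length), w j = l[j] := by
      intro j hj
      simp only [hw]
      exact List.getD_eq_getElem l vinit hj
    have hidx : ∀ j, j < N → l.idxOf (w j) = j := by
      intro j hj
      rw [hwj j (by omega)]
      exact hnd.idxOf_getElem j (by omega)
    have hτk : choice (mkMD M (gSt N E vinit l) hen) (mkMD_MD M (gSt N E vinit l) hen).2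
        (hv (w (N - 1)) : HSt V N) = hτ := by
      rw [mkMD_choice]
      show gV N E vinit l (w (N - 1)) = hτ
      rw [gV, dif_neg]
      rw [hidx (N - 1) (by omega)]
      rintro ⟨-, habs⟩
      omega
    have hedge : ∀ k, k < N - 1 → ∃ h : (w k, w (k + 1)) ∈ E,
        choice (mkMD M (gSt N E vinit l) hen) (mkMD_MD M (gSt N E vinit l) hen).2
          (hv (w k) : HSt V N) = Sum.inl ⟨(w k, w (k + 1)), h⟩ := by
      intro k hk
      have hkN : k < N := by omega
      have hE : (w k, w (k + 1)) ∈ E := by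
        rw [hwj k (by omega), hwj (k + 1) (by omega)]
        rw [List.Chain', List.isChain_iff_getElem] at hch
        have := hch k (by omega)
        simpa [List.get_eq_getElem] using this
      refine ⟨hE, ?_⟩
      rw [mkMD_choice]
      show gV N E vinit l (w k) = _
      have hgd : l.getD (l.idxOf (w k) + 1) vinit = w (k + 1) := by
        rw [hidx k hkN]
      rw [gV]
      rw [dif_pos (⟨by rw [hgd]; exact hE, by rw [hidx k hkN]; omega⟩ :
        (w k, l.getD (l.idxOf (w k) + 1) vinit) ∈ E ∧ l.idxOf (w k) + 1 < N)]
      congr 1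
      exact Subtype.ext (by simp only [Prod.mk.injEq]; exact ⟨trivial, hgd⟩)
    have := reachA_w hM hN (mkMD M (gSt N E vinit l) hen) (mkMD_MD M (gSt N E vinit l) hen)
      w (N - 1) hw0 hτk hedge
    rw [this]
    congr 1
    omega
  · exact reachB hM hN _ (mkMD_MD M (gSt N E vinit l) hen)

end Construct

section Backward

variable {V : Type} [Fintype V] [DecidableEq V] {N : ℕ} {E : Set (V × V)} {vinit : V}
  {M : MDP (HSt V N) (HAct V E)}

/-- One step of the vertex walk induced by an MD scheduler. -/
def nextV (σ : Scheduler M) (hd : σ.Deterministic) (v : V) : V :=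
  match choice σ hd (hv v : HSt V N) with
  | Sum.inl e => e.1.2
  | Sum.inr _ => v

lemma nextV_eq (σ : Scheduler M) (hd : σ.Deterministic) (v : V)
    (e : {e : V × V // e ∈ E}) (hc : choice σ hd (hv v : HSt V N) = Sum.inl e) :
    nextV σ hd v = e.1.2 := by
  unfold nextV
  rw [hc]

lemma backward (hM : IsHamiltonMDP N E vinit M) (hN : 2 ≤ N)
    (hcard : Fintype.card V = N) (σ : Scheduler M) (hσ : σ.MD)
    (ε : ℝ) (hε0 : 0 ≤ ε) (hεlt : ε < 1 / 2 ^ (N + 1))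
    (hb : |reachProb M σ (hs0 : HSt V N) {hsa} - reachProb M σ (hs0 : HSt V N) {hsb}| ≤ ε) :
    ∃ l : List V, l.length = N ∧ l.Nodup ∧ l.head? = some vinit ∧
      l.Chain' (fun a b => (a, b) ∈ E) := by
  have hB := reachB hM hN σ hσ
  set w : ℕ → V := fun k => (nextV σ hσ.2)^[k] vinit with hw
  have hw0 : w 0 = vinit := rfl
  have hwsucc : ∀ k, w (k + 1) = nextV σ hσ.2 (w k) := by
    intro k
    simp only [hw, Function.iterate_succ_apply']
  have hpow_pos : (0:ℝ) < ((2:ℝ)⁻¹) ^ (N + 1) := by positivity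
  have hhalfpow : ∀ m : ℕ, ((2:ℝ)⁻¹) ^ m = 1 / 2 ^ m := by
    intro m; rw [inv_pow, one_div]
  -- description of steps where no τ is chosen
  have hstep : ∀ k, choice σ hσ.2 (hv (w k) : HSt V N) ≠ hτ →
      ∃ h : (w k, w (k + 1)) ∈ E,
        choice σ hσ.2 (hv (w k) : HSt V N) = Sum.inl ⟨(w k, w (k + 1)), h⟩ := by
    intro k hkτ
    rcases choice_v hM σ hσ (w k) with hc | ⟨e, hc, hev⟩
    · exact absurd hc hkτ
    · have hnext : w (k + 1) = e.1.2 := by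
        rw [hwsucc k]
        exact nextV_eq σ hσ.2 (w k) e hc
      have hval : e.1 = (w k, w (k + 1)) := by
        rw [hnext, ← hev, Prod.mk.eta]
      refine ⟨hval ▸ e.2, ?_⟩
      rw [hc]
      exact congrArg Sum.inl (Subtype.ext hval)
  by_cases hex : ∃ k, choice σ hσ.2 (hv (w k) : HSt V N) = hτ
  · -- τ is eventually chosen
    set k0 := Nat.find hex with hk0
    have hτk : choice σ hσ.2 (hv (w k0) : HSt V N) = hτ := Nat.find_spec hex
    have hmin : ∀ k, k < k0 → choice σ hσ.2 (hv (w k) : HSt V N) ≠ hτ :=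
      fun k hk => Nat.find_min hex hk
    have hedge : ∀ k, k < k0 → ∃ h : (w k, w (k + 1)) ∈ E,
        choice σ hσ.2 (hv (w k) : HSt V N) = Sum.inl ⟨(w k, w (k + 1)), h⟩ :=
      fun k hk => hstep k (hmin k hk)
    have hA := reachA_w hM hN σ hσ w k0 hw0 hτk hedge
    -- injectivity of the walk up to k0
    have hinj : ∀ i j, i < j → j ≤ k0 → w i ≠ w j := by
      intro i j hij hj hww
      have hshift : ∀ t, w (i + t) = w (j + t) := by
        intro t
        induction t with
        | zero => simpa using hww
        | succ t ih => rw [← Nat.add_assoc, ← Nat.add_assoc, hwsucc, hwsucc, ih]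
      have h1 : i + (k0 - j) < k0 := by omega
      have h2 : w (i + (k0 - j)) = w k0 := by
        rw [hshift (k0 - j)]
        congr 1
        omega
      exact hmin _ h1 (by rw [h2]; exact hτk)
    have hinj' : ∀ i j, i ≤ k0 → j ≤ k0 → w i = w j → i = j := by
      intro i j hi hj hww
      rcases Nat.lt_trichotomy i j with h | h | h
      · exact absurd hww (hinj i j h hj)
      · exact h
      · exact absurd hww.symm (hinj j i h hi)
    have hk0le : k0 + 1 ≤ N := by
      have hf : Function.Injective (fun i : Fin (k0 + 1) => w i.1) := by
        intro a b hab
        exact Fin.ext (hinj' a.1 b.1 (by omega) (by omega) hab)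
      have := Fintype.card_le_of_injective _ hf
      rwa [Fintype.card_fin, hcard] at this
    -- show k0 + 1 = N
    have hk0eq : k0 + 1 = N := by
      by_contra hne
      have hlt : k0 + 1 < N := by omega
      have p1 : ((2:ℝ)⁻¹) ^ N ≤ ((2:ℝ)⁻¹) ^ (k0 + 2) :=
        pow_le_pow_of_le_one (by norm_num) (by norm_num) (by omega)
      have p2 : ((2:ℝ)⁻¹) ^ (N + 1) ≤ ((2:ℝ)⁻¹) ^ (k0 + 2) :=
        pow_le_pow_of_le_one (by norm_num) (by norm_num) (by omega)
      have p3 : ((2:ℝ)⁻¹) ^ (k0 + 2) = ((2:ℝ)⁻¹) ^ (k0 + 1) * 2⁻¹ := pow_succ _ _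
      have hdiff : ((2:ℝ)⁻¹) ^ (N + 1) ≤
          reachProb M σ (hs0 : HSt V N) {hsa} - reachProb M σ (hs0 : HSt V N) {hsb} := by
        rw [hA, hB]
        linarith
      have habs : ((2:ℝ)⁻¹) ^ (N + 1) ≤ ε :=
        le_trans hdiff (le_trans (le_abs_self _) hb)
      rw [hhalfpow] at habs
      linarith
    -- construct the Hamiltonian path
    refine ⟨(List.range N).map w, by simp, ?_, ?_, ?_⟩
    · refine (List.nodup_range (n := N)).map_on ?_
      intro i hi j hj hww
      rw [List.mem_range] at hi hj
      exact hinj' i j (by omega) (by omega) hww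
    · obtain ⟨m, rfl⟩ : ∃ m, N = m + 1 := ⟨N - 1, by omega⟩
      rw [List.range_succ_eq_map]
      simp [hw0]
    · rw [List.Chain', List.isChain_map, ← hk0eq, List.isChain_range_succ]
      intro m hm
      exact (hedge m hm).1
  · -- τ is never chosen : contradiction
    exfalso
    push_neg at hex
    have hedge : ∀ k, ∃ h : (w k, w (k + 1)) ∈ E,
        choice σ hσ.2 (hv (w k) : HSt V N) = Sum.inl ⟨(w k, w (k + 1)), h⟩ :=
      fun k => hstep k (hex k)
    have hA := reachA_w0 hM hN σ hσ w hw0 hedge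
    rw [hA, hB] at hb
    rw [zero_sub, abs_neg, abs_of_nonneg (by positivity)] at hb
    have : ((2:ℝ)⁻¹) ^ N = 2 * (1 / 2 ^ (N + 1)) := by
      rw [inv_pow, one_div]
      rw [pow_succ]
      field_simp
    rw [this] at hb
    have h2 : (0:ℝ) < 1 / 2 ^ (N + 1) := by positivity
    linarith
end Backward

end HamAux
end HamAux

theorem hamiltonian_path_iff_MD_scheduler_approx_equality
    {V : Type} [Fintype V] [DecidableEq V] (N : ℕ) (hcard : Fintype.card V = N)
    (hV : 2 ≤ N) (E : Set (V × V)) (vinit : V)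
    (M : MDP (HSt V N) (HAct V E)) (hM : IsHamiltonMDP N E vinit M)
    (ε : ℚ) (hε0 : 0 ≤ ε) (hεlt : (ε : ℝ) < 1 / 2 ^ (N + 1)) :
    (∃ l : List V, l.length = N ∧ l.Nodup ∧ l.head? = some vinit ∧
        l.Chain' (fun a b => (a, b) ∈ E)) ↔
    (∃ σ : Scheduler M, σ.MD ∧
        |reachProb M σ hs0 {hsa} - reachProb M σ hs0 {hsb}| ≤ (ε : ℝ)) := by
  constructor
  · rintro ⟨l, hlen, hnd, hhd, hch⟩
    obtain ⟨σ, hσ, hA, hB⟩ := HamAux.forward hM hV l hlen hnd hhd hch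
    refine ⟨σ, hσ, ?_⟩
    rw [hA, hB, sub_self, abs_zero]
    exact_mod_cast hε0
  · rintro ⟨σ, hσ, hb⟩
    exact HamAux.backward hM hV hcard σ hσ (ε : ℝ) (by exact_mod_cast hε0) hεlt hb
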